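/- Let E(n) denote, for n ≥ 2, the number of triples on the (1,0)-Euclid tree whose maximum coordinate is n, and set E(1) = 1. Then for every positive integer n, ⌊n/2⌋ + 1 = Σ_{d | n} E(d). -/

import Mathlib

/-- The maximum coordinate of a triple. -/
def tmax (T : ℕ × ℕ × ℕ) : ℕ := max T.1 (max T.2.1 T.2.2)

/-- First branching operation Γ_{β,1}(τ₁,τ₂,τ₃) = (τ₂, τ₃, τ₂+τ₃+β). -/
def Gamma1 (β : ℕ) (T : ℕ × ℕ × ℕ) : ℕ × ℕ × ℕ := (T.2.1, T.2.2, T.2.1 + T.2.2 + β)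

/-- Second branching operation Γ_{β,2}(τ₁,τ₂,τ₃) = (τ₁, τ₃, τ₁+τ₃+β). -/
def Gamma2 (β : ℕ) (T : ℕ × ℕ × ℕ) : ℕ × ℕ × ℕ := (T.1, T.2.2, T.1 + T.2.2 + β)

/-- The j-th layer of the (α,β)-Euclid tree. -/
def layer (α β : ℕ) : ℕ → Set (ℕ × ℕ × ℕ)
  | 0 => {(α, α, 2 * α + β)}
  | j + 1 => {T | ∃ P ∈ layer α β j, T = Gamma1 β P ∨ T = Gamma2 β P}

/-- The (α,β)-Euclid tree: all triples on some layer. -/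
def EuclidTree (α β : ℕ) : Set (ℕ × ℕ × ℕ) := ⋃ j, layer α β j

/-- E(1) = 1 and, for n ≥ 2, E(n) is the number of triples on the (1,0)-Euclid tree
with maximum coordinate n. -/
noncomputable def E (n : ℕ) : ℕ :=
  if n = 1 then 1 else {T ∈ EuclidTree 1 0 | tmax T = n}.ncard

lemma root_mem : ((1, 1, 2) : ℕ × ℕ × ℕ) ∈ EuclidTree 1 0 := by
  exact Set.mem_iUnion.2 ⟨0, by simp [layer]⟩

lemma gamma1_mem {T : ℕ × ℕ × ℕ} (h : T ∈ EuclidTree 1 0) :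
    Gamma1 0 T ∈ EuclidTree 1 0 := by
  obtain ⟨j, hj⟩ := Set.mem_iUnion.1 h
  exact Set.mem_iUnion.2 ⟨j + 1, ⟨T, hj, Or.inl rfl⟩⟩

lemma gamma2_mem {T : ℕ × ℕ × ℕ} (h : T ∈ EuclidTree 1 0) :
    Gamma2 0 T ∈ EuclidTree 1 0 := by
  obtain ⟨j, hj⟩ := Set.mem_iUnion.1 h
  exact Set.mem_iUnion.2 ⟨j + 1, ⟨T, hj, Or.inr rfl⟩⟩

lemma tree_mem_of (b : ℕ) : ∀ a : ℕ, 0 < a → a < b → Nat.gcd a b = 1 →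
    ((a, b, a + b) : ℕ × ℕ × ℕ) ∈ EuclidTree 1 0 := by
  induction b using Nat.strong_induction_on with
  | _ b ih =>
    intro a ha hab hg
    rcases lt_trichotomy (2 * a) b with h | h | h
    · -- parent (a, b - a, b), via Gamma2
      have hg' : Nat.gcd a (b - a) = 1 := by
        have : Nat.gcd a (b - a + a) = Nat.gcd a (b - a) := Nat.gcd_add_self_right _ _
        rw [Nat.sub_add_cancel hab.le, hg] at this
        exact this.symm
      have hp : ((a, b - a, a + (b - a)) : ℕ × ℕ × ℕ) ∈ EuclidTree 1 0 :=
        ih (b - a) (by omega) a ha (by omega) hg'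
      have := gamma2_mem hp
      simpa [Gamma2, show a + (b - a) = b by omega] using this
    · -- b = 2a, so a = 1, b = 2
      have ha1 : a = 1 := by
        have : a ∣ b := ⟨2, by omega⟩
        have h2 := Nat.dvd_gcd (dvd_refl a) this
        rw [hg] at h2
        exact Nat.dvd_one.mp h2
      subst ha1
      have hb : b = 2 := by omega
      subst hb
      have := gamma1_mem root_mem
      simpa [Gamma1] using this
    · -- parent (b - a, a, b), via Gamma1
      have hg' : Nat.gcd (b - a) a = 1 := by
        have h1 : Nat.gcd a (b - a + a) = Nat.gcd a (b - a) := Nat.gcd_add_self_right _ _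
        rw [Nat.sub_add_cancel hab.le, hg] at h1
        rw [Nat.gcd_comm]; exact h1.symm
      have hp : ((b - a, a, b - a + a) : ℕ × ℕ × ℕ) ∈ EuclidTree 1 0 :=
        ih a hab (b - a) (by omega) (by omega) hg'
      have := gamma1_mem hp
      have e : b - a + a = b := by omega
      simpa [Gamma1, e] using this

lemma mem_tree_iff (T : ℕ × ℕ × ℕ) : T ∈ EuclidTree 1 0 ↔
    T = (1, 1, 2) ∨ ∃ a b : ℕ, 0 < a ∧ a < b ∧ Nat.gcd a b = 1 ∧ T = (a, b, a + b) := by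
  constructor
  · intro h
    obtain ⟨j, hj⟩ := Set.mem_iUnion.1 h
    clear h
    induction j generalizing T with
    | zero => left; simpa [layer] using hj
    | succ j ihj =>
      obtain ⟨P, hP, hT⟩ := hj
      rcases ihj P hP with hroot | ⟨a, b, ha, hab, hg, hPe⟩
      · subst hroot
        rcases hT with h | h <;>
          · right; exact ⟨1, 2, by norm_num, by norm_num, by norm_num,
              by simp [h, Gamma1, Gamma2]⟩
      · subst hPe
        right
        rcases hT with h | h
        · refine ⟨b, a + b, by omega, by omega, ?_, by simp [h, Gamma1]⟩
          rw [Nat.gcd_add_self_right, Nat.gcd_comm]; exact hg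
        · refine ⟨a, a + b, by omega, by omega, ?_, by simp [h, Gamma2]⟩
          rw [Nat.gcd_self_add_right]; exact hg
  · rintro (rfl | ⟨a, b, ha, hab, hg, rfl⟩)
    · exact root_mem
    · exact tree_mem_of b a ha hab hg

/-- The counting set for `n ≥ 3` as an explicit image. -/
lemma set_eq (n : ℕ) (hn : 3 ≤ n) :
    {T ∈ EuclidTree 1 0 | tmax T = n} =
      (fun a => ((a, n - a, n) : ℕ × ℕ × ℕ)) ''
        {a : ℕ | 0 < a ∧ 2 * a < n ∧ Nat.gcd a n = 1} := by
  ext T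
  simp only [Set.mem_setOf_eq, Set.mem_image]
  constructor
  · rintro ⟨hT, hmax⟩
    rcases (mem_tree_iff T).1 hT with rfl | ⟨a, b, ha, hab, hg, rfl⟩
    · exfalso; simp [tmax] at hmax; omega
    · have hm : tmax (a, b, a + b) = a + b := by simp [tmax]
      rw [hm] at hmax
      refine ⟨a, ⟨ha, by omega, ?_⟩, ?_⟩
      · have h5 : Nat.gcd a (a + b) = Nat.gcd a b := Nat.gcd_self_add_right _ _
        rw [← hmax, h5, hg]
      · have e1 : a + b - a = b := by omega
        have e2 : a + b = a + b := rfl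
        simp only [Prod.mk.injEq]
        exact ⟨trivial, by omega, by omega⟩
  · rintro ⟨a, ⟨ha, h2, hg⟩, rfl⟩
    have hg' : Nat.gcd a (n - a) = 1 := by
      have : Nat.gcd a (n - a + a) = Nat.gcd a (n - a) := Nat.gcd_add_self_right _ _
      rw [show n - a + a = n by omega, hg] at this
      exact this.symm
    constructor
    · have := tree_mem_of (n - a) a ha (by omega) hg'
      have e : a + (n - a) = n := by omega
      rw [e] at this
      exact this
    · simp [tmax]; omega

lemma E_two : E 2 = 1 := by
  have : {T ∈ EuclidTree 1 0 | tmax T = 2} = {((1, 1, 2) : ℕ × ℕ × ℕ)} := by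
    ext T
    simp only [Set.mem_setOf_eq, Set.mem_singleton_iff]
    constructor
    · rintro ⟨hT, hmax⟩
      rcases (mem_tree_iff T).1 hT with rfl | ⟨a, b, ha, hab, hg, rfl⟩
      · rfl
      · exfalso; simp [tmax] at hmax; omega
    · rintro rfl
      exact ⟨root_mem, by simp [tmax]⟩
  rw [E, if_neg (by norm_num), this, Set.ncard_singleton]

lemma two_mul_E (n : ℕ) (hn : 3 ≤ n) : 2 * E n = Nat.totient n := by
  have hset := set_eq n hn
  have hinj : Set.InjOn (fun a => ((a, n - a, n) : ℕ × ℕ × ℕ))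
      {a : ℕ | 0 < a ∧ 2 * a < n ∧ Nat.gcd a n = 1} := by
    intro x _ y _ h
    simpa using congrArg (fun T => T.1) h
  have hA : {a : ℕ | 0 < a ∧ 2 * a < n ∧ Nat.gcd a n = 1} =
      ↑((Finset.range n).filter fun a => 0 < a ∧ 2 * a < n ∧ Nat.gcd a n = 1) := by
    ext a
    simp only [Finset.coe_filter, Finset.mem_range, Set.mem_setOf_eq]
    constructor
    · rintro ⟨h1, h2, h3⟩; exact ⟨by omega, h1, h2, h3⟩
    · rintro ⟨_, h⟩; exact h
  have hE : E n = ((Finset.range n).filter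
      fun a => 0 < a ∧ 2 * a < n ∧ Nat.gcd a n = 1).card := by
    rw [E, if_neg (by omega), hset, Set.ncard_image_of_injOn hinj, hA,
      Set.ncard_coe_finset]
  -- the complementary half
  have hcard : ((Finset.range n).filter fun a => 0 < a ∧ 2 * a < n ∧ Nat.gcd a n = 1).card =
      ((Finset.range n).filter fun a => 0 < a ∧ n < 2 * a ∧ Nat.gcd a n = 1).card := by
    apply Finset.card_bij (fun a _ => n - a)
    · intro a ha
      simp only [Finset.mem_filter, Finset.mem_range] at ha ⊢
      obtain ⟨h0, h1, h2, h3⟩ := ha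
      refine ⟨by omega, by omega, by omega, ?_⟩
      have : Nat.gcd (n - a) (n - a + a) = Nat.gcd (n - a) a := Nat.gcd_self_add_right _ _
      rw [show n - a + a = n by omega] at this
      rw [this, Nat.gcd_comm]
      have h4 : Nat.gcd a (n - a + a) = Nat.gcd a (n - a) := Nat.gcd_add_self_right _ _
      rw [show n - a + a = n by omega] at h4
      rw [← h4, h3]
    · intro a ha b hb h
      simp only [Finset.mem_filter, Finset.mem_range] at ha hb
      omega
    · intro b hb
      simp only [Finset.mem_filter, Finset.mem_range] at hb
      obtain ⟨h0, h1, h2, h3⟩ := hb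
      refine ⟨n - b, ?_, by omega⟩
      simp only [Finset.mem_filter, Finset.mem_range]
      refine ⟨by omega, by omega, by omega, ?_⟩
      have : Nat.gcd (n - b) (n - b + b) = Nat.gcd (n - b) b := Nat.gcd_self_add_right _ _
      rw [show n - b + b = n by omega] at this
      rw [this, Nat.gcd_comm]
      have h4 : Nat.gcd b (n - b + b) = Nat.gcd b (n - b) := Nat.gcd_add_self_right _ _
      rw [show n - b + b = n by omega] at h4
      rw [← h4, h3]
  have htot : Nat.totient n = ((Finset.range n).filter fun a => Nat.gcd a n = 1).card := by
    rw [Nat.totient]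
    congr 1
    apply Finset.filter_congr
    intro a _
    simp [Nat.Coprime, Nat.gcd_comm]
  -- split the totient filter
  have hsplit : ((Finset.range n).filter fun a => Nat.gcd a n = 1) =
      ((Finset.range n).filter fun a => 0 < a ∧ 2 * a < n ∧ Nat.gcd a n = 1) ∪
      ((Finset.range n).filter fun a => 0 < a ∧ n < 2 * a ∧ Nat.gcd a n = 1) := by
    ext a
    simp only [Finset.mem_union, Finset.mem_filter, Finset.mem_range]
    constructor
    · rintro ⟨h1, h2⟩
      have h0 : 0 < a := by
        rcases Nat.eq_zero_or_pos a with rfl | h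
        · simp [Nat.gcd_zero_left] at h2; omega
        · exact h
      have hne : 2 * a ≠ n := by
        intro he
        have hd : a ∣ n := ⟨2, by omega⟩
        have := Nat.dvd_gcd (dvd_refl a) hd
        rw [h2] at this
        have := Nat.dvd_one.mp this
        omega
      rcases lt_or_gt_of_ne hne with h | h
      · exact Or.inl ⟨h1, h0, h, h2⟩
      · exact Or.inr ⟨h1, h0, h, h2⟩
    · rintro (⟨h1, _, _, h2⟩ | ⟨h1, _, _, h2⟩) <;> exact ⟨h1, h2⟩
  have hdisj : Disjoint
      ((Finset.range n).filter fun a => 0 < a ∧ 2 * a < n ∧ Nat.gcd a n = 1)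
      ((Finset.range n).filter fun a => 0 < a ∧ n < 2 * a ∧ Nat.gcd a n = 1) := by
    rw [Finset.disjoint_left]
    intro a ha hb
    simp only [Finset.mem_filter] at ha hb
    omega
  rw [htot, hsplit, Finset.card_union_of_disjoint hdisj, ← hcard, hE]
  omega

lemma two_mul_E_eq (d : ℕ) (hd : 1 ≤ d) :
    2 * E d = Nat.totient d + (if d ≤ 2 then 1 else 0) := by
  rcases Nat.lt_or_ge d 3 with h | h
  · interval_cases d
    · simp [E, Nat.totient_one]
    · rw [E_two]; simp
  · rw [two_mul_E d h, if_neg (show ¬ d ≤ 2 by omega), Nat.add_zero]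


/-- For every positive integer n, ⌊n/2⌋ + 1 = Σ_{d ∣ n} E(d). -/
theorem floor_half_add_one_eq_sum_E (n : ℕ) (hn : 1 ≤ n) :
    n / 2 + 1 = ∑ d ∈ n.divisors, E d := by
  have key : 2 * ∑ d ∈ n.divisors, E d =
      n + ∑ d ∈ n.divisors, (if d ≤ 2 then 1 else 0) := by
    rw [Finset.mul_sum]
    rw [Finset.sum_congr rfl fun d hd =>
      two_mul_E_eq d (Nat.pos_of_mem_divisors hd)]
    rw [Finset.sum_add_distrib, Nat.sum_totient]
  have hind : ∑ d ∈ n.divisors, (if d ≤ 2 then 1 else 0) =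
      if 2 ∣ n then 2 else 1 := by
    rw [← Finset.sum_filter]
    have : (n.divisors.filter fun d => d ≤ 2) = if 2 ∣ n then {1, 2} else {1} := by
      split_ifs with h2
      · ext d
        simp only [Finset.mem_filter, Nat.mem_divisors, Finset.mem_insert,
          Finset.mem_singleton]
        constructor
        · rintro ⟨⟨hd, _⟩, hle⟩
          have : d ≠ 0 := by rintro rfl; exact absurd (Nat.eq_zero_of_zero_dvd hd) (by omega)
          omega
        · rintro (rfl | rfl)
          · exact ⟨⟨one_dvd n, by omega⟩, by norm_num⟩
          · exact ⟨⟨h2, by omega⟩, by norm_num⟩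
      · ext d
        simp only [Finset.mem_filter, Nat.mem_divisors, Finset.mem_singleton]
        constructor
        · rintro ⟨⟨hd, hn0⟩, hle⟩
          have h0 : d ≠ 0 := by rintro rfl; exact hn0 (Nat.eq_zero_of_zero_dvd hd)
          have hd12 : d = 1 ∨ d = 2 := by omega
          rcases hd12 with rfl | rfl
          · rfl
          · exact absurd hd h2
        · rintro rfl
          exact ⟨⟨one_dvd n, by omega⟩, by norm_num⟩
    rw [this]
    split_ifs <;> simp [Finset.sum_const]
  rw [hind] at key
  rcases Nat.even_or_odd n with he | ho
  · have h2 : 2 ∣ n := he.two_dvd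
    rw [if_pos h2] at key
    omega
  · have h2 : ¬ 2 ∣ n := by
      rw [Nat.odd_iff] at ho; omega
    rw [if_neg h2] at key
    omega
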